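/- Let i be a nonnegative integer and let α, γ be complex numbers with α+2+i ≠ 0. Assume that (2α+4+2i)_{m+n} and (γ/2)_n are nonzero for all nonnegative integers m, n, that no argument of Γ appearing on the right-hand side below is a nonpositive integer, and that the double series defining the Kampé de Fériet function converges absolutely. Then F^{2:0;1}_{1:0;1}[α, γ : — ; γ/2+1 ; 2α+4+2i : — ; γ/2 ; −1, 1] = ((−1)^i · 2^{i+2}) / ((α+2+i) · (i+1)!) · Σ_{r=0}^{i} (−1)^r · C(i,r) · Γ((α+i+r+3)/2) / Γ((α−i+r+1)/2). -/

import Mathlib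

open Complex

noncomputable section

/-- Pochhammer symbol `(a)_n = a (a+1) ⋯ (a+n-1)`. -/
def poch (a : ℂ) (n : ℕ) : ℂ := ∏ k ∈ Finset.range n, (a + k)

/-- `z` is not a nonpositive integer. -/
def notNonposInt (z : ℂ) : Prop := ∀ n : ℕ, z ≠ -(n : ℂ)

/-- Term of the Kampé de Fériet double series `F^{2:0;1}_{1:0;1}`. -/
def kdfTerm (h₁ h₂ b₁ β d₁ x y : ℂ) (p : ℕ × ℕ) : ℂ :=
  poch h₁ (p.1 + p.2) * poch h₂ (p.1 + p.2) * poch b₁ p.2 /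
    (poch β (p.1 + p.2) * poch d₁ p.2) * x ^ p.1 * y ^ p.2 /
    ((p.1.factorial : ℂ) * (p.2.factorial : ℂ))

/-! ### Auxiliary lemmas -/

lemma poch_zero (a : ℂ) : poch a 0 = 1 := Finset.prod_range_zero _

lemma poch_one (a : ℂ) : poch a 1 = a := by simp [poch]

lemma poch_succ (a : ℂ) (n : ℕ) : poch a (n+1) = poch a n * (a + n) :=
  Finset.prod_range_succ _ _

lemma poch_shift' (a : ℂ) (n : ℕ) : a * poch (a+1) n = poch a n * (a + n) := by
  induction n with
  | zero => simp [poch_zero]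
  | succ n ih =>
    rw [poch_succ, poch_succ, ← mul_assoc, ih]
    push_cast; ring

lemma Gamma_add_nat (w : ℂ) (hw : notNonposInt w) (n : ℕ) :
    Complex.Gamma (w + n) = poch w n * Complex.Gamma w := by
  induction n with
  | zero => simp [poch_zero]
  | succ n ih =>
    have hne : w + n ≠ 0 := by
      intro h
      exact hw n (by linear_combination h)
    have harg : w + (n+1 : ℕ) = (w + n) + 1 := by push_cast; ring
    rw [harg, Complex.Gamma_add_one _ hne, ih, poch_succ]
    ring

lemma alt_choose (N : ℕ) (h : 1 ≤ N) :
    ∑ k ∈ Finset.range (N+1), (-1:ℂ)^k * (N.choose k : ℂ) = 0 := by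
  have := Int.alternating_sum_range_choose (n := N)
  rw [if_neg (by omega)] at this
  have h2 : ((∑ m ∈ Finset.range (N+1), (-1:ℤ)^m * (N.choose m : ℤ) : ℤ) : ℂ) = 0 := by
    rw [this]; norm_num
  push_cast at h2
  convert h2 using 2

def Asum (i m : ℕ) (z : ℂ) : ℂ :=
  ∑ r ∈ Finset.range (i+1), (-1:ℂ)^r * (i.choose r : ℂ) * poch (z + r/2) m

lemma Asum_rec (i m : ℕ) (z : ℂ) :
    Asum (i+1) (m+1) z
      = (z + m) * Asum (i+1) m z - ((i:ℂ)+1)/2 * Asum i m (z + 1/2) := by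
  unfold Asum
  have key : ∀ r ∈ Finset.range (i+2),
      (-1:ℂ)^r * ((i+1).choose r : ℂ) * poch (z + r/2) (m+1)
        = (z + m) * ((-1:ℂ)^r * ((i+1).choose r : ℂ) * poch (z + r/2) m)
          + (-1:ℂ)^r * ((i+1).choose r : ℂ) * poch (z + r/2) m * (r/2) := by
    intro r _
    rw [poch_succ]
    ring
  rw [Finset.sum_congr rfl key, Finset.sum_add_distrib, ← Finset.mul_sum]
  have h2 : ∑ r ∈ Finset.range (i+2),
      (-1:ℂ)^r * ((i+1).choose r : ℂ) * poch (z + r/2) m * (r/2)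
      = -(((i:ℂ)+1)/2 * ∑ r ∈ Finset.range (i+1),
          (-1:ℂ)^r * (i.choose r : ℂ) * poch (z + 1/2 + r/2) m) := by
    rw [Finset.sum_range_succ']
    simp only [Nat.cast_zero, zero_div, mul_zero, add_zero]
    rw [Finset.mul_sum, ← Finset.sum_neg_distrib]
    apply Finset.sum_congr rfl
    intro r _
    have hch : (((i+1).choose (r+1) : ℕ) : ℂ) * ((r:ℂ)+1) = ((i:ℂ)+1) * (i.choose r : ℂ) := by
      have := Nat.add_one_mul_choose_eq i r
      have h3 : ((i.succ * i.choose r : ℕ) : ℂ) = ((i.succ.choose r.succ * r.succ : ℕ) : ℂ) := by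
        exact_mod_cast congrArg (Nat.cast : ℕ → ℂ) this
      push_cast [Nat.succ_eq_add_one] at h3
      linear_combination -h3
    have harg : (z + ((r:ℂ)+1)/2) = (z + 1/2 + (r:ℂ)/2) := by ring
    push_cast
    rw [harg]
    linear_combination (-(-1:ℂ)^r * poch (z + 1/2 + (r:ℂ)/2) m / 2) * hch
  rw [h2]
  ring

lemma Asum_mzero (i : ℕ) (h : 1 ≤ i) (z : ℂ) : Asum i 0 z = 0 := by
  unfold Asum
  simp only [poch_zero, mul_one]
  exact alt_choose i h

lemma Asum_lt : ∀ m i : ℕ, m < i → ∀ z : ℂ, Asum i m z = 0 := by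
  intro m
  induction m with
  | zero => intro i h z; exact Asum_mzero i h z
  | succ m ih =>
    intro i h z
    obtain ⟨j, rfl⟩ : ∃ j, i = j + 1 := ⟨i - 1, by omega⟩
    rw [Asum_rec, ih (j+1) (by omega), ih j (by omega)]
    ring

lemma Asum_diag (i : ℕ) (z : ℂ) : Asum i i z = (-1:ℂ)^i * (i.factorial : ℂ) / 2^i := by
  induction i generalizing z with
  | zero => simp [Asum, poch_zero]
  | succ i ih =>
    rw [Asum_rec, Asum_lt i (i+1) (by omega), ih]
    push_cast [Nat.factorial_succ]
    ring

lemma Asum_diag1 (i : ℕ) (z : ℂ) :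
    Asum i (i+1) z = (-1:ℂ)^i * ((i+1).factorial : ℂ) * (4*z + 3*i) / 2^(i+2) := by
  induction i generalizing z with
  | zero => simp [Asum, poch_one, poch_zero]; ring
  | succ i ih =>
    rw [Asum_rec, Asum_diag, ih]
    push_cast [Nat.factorial_succ]
    ring

lemma comb_zero (c : ℂ) (N : ℕ) (h : 2 ≤ N) :
    ∑ k ∈ Finset.range (N+1), (-1:ℂ)^k * (N.choose k : ℂ) * (c + k) = 0 := by
  have hsplit : ∑ k ∈ Finset.range (N+1), (-1:ℂ)^k * (N.choose k : ℂ) * (c + k)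
      = c * (∑ k ∈ Finset.range (N+1), (-1:ℂ)^k * (N.choose k : ℂ))
        + ∑ k ∈ Finset.range (N+1), (-1:ℂ)^k * (N.choose k : ℂ) * k := by
    rw [Finset.mul_sum, ← Finset.sum_add_distrib]
    exact Finset.sum_congr rfl fun k _ => by ring
  rw [hsplit, alt_choose N (by omega), mul_zero, zero_add]
  obtain ⟨M, rfl⟩ : ∃ M, N = M + 1 := ⟨N - 1, by omega⟩
  rw [Finset.sum_range_succ']
  have hlast : (-1:ℂ)^0 * ((M+1).choose 0 : ℂ) * ((0:ℕ):ℂ) = 0 := by norm_num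
  rw [hlast, add_zero]
  have hcong : ∀ k ∈ Finset.range (M+1),
      (-1:ℂ)^(k+1) * (((M+1)).choose (k+1) : ℂ) * (((k+1:ℕ)):ℂ)
        = (-((M:ℂ)+1)) * ((-1:ℂ)^k * (M.choose k : ℂ)) := by
    intro k _
    have h3 := Nat.add_one_mul_choose_eq M k
    have h4 : ((M:ℂ)+1) * (M.choose k : ℂ) = ((M+1).choose (k+1) : ℂ) * ((k:ℂ)+1) := by
      exact_mod_cast congrArg (Nat.cast : ℕ → ℂ) h3
    push_cast
    rw [pow_succ]
    linear_combination ((-1:ℂ)^k) * h4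
  rw [Finset.sum_congr rfl hcong, ← Finset.mul_sum, alt_choose M (by omega), mul_zero]

def diagEquiv : (Σ N : ℕ, Fin (N+1)) ≃ ℕ × ℕ where
  toFun x := (x.1 - x.2, x.2)
  invFun p := ⟨p.1 + p.2, ⟨p.2, by omega⟩⟩
  left_inv := by
    rintro ⟨N, k⟩
    have hk : (k : ℕ) ≤ N := Nat.lt_succ_iff.mp k.2
    refine Sigma.ext ?_ ?_
    · simp; omega
    · rw [Fin.heq_ext_iff (by simp; omega)]
  right_inv := by rintro ⟨m, n⟩; simp

lemma kdf_diag (α γ βv : ℂ) (N k : ℕ) (hk : k ≤ N)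
    (hβN : poch βv N ≠ 0) (hdk : poch (γ/2) k ≠ 0) (hc : γ/2 ≠ 0) :
    kdfTerm α γ (γ/2+1) βv (γ/2) (-1) 1 (N-k, k)
      = ((-1:ℂ)^N * poch α N * poch γ N / (poch βv N * (γ/2) * (N.factorial : ℂ)))
        * ((-1:ℂ)^k * (N.choose k : ℂ) * (γ/2 + (k:ℂ))) := by
  have hNk : N - k + k = N := by omega
  have hsgn : (-1:ℂ)^(N-k) = (-1)^N * (-1)^k := by
    conv_rhs => rw [← hNk, pow_add]
    rw [mul_assoc, ← pow_add]
    have : (-1:ℂ)^(k+k) = 1 := Even.neg_one_pow ⟨k, rfl⟩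
    rw [this, mul_one]
  have hposh := poch_shift' (γ/2) k
  have hfac : ((N.choose k : ℕ):ℂ) * (k.factorial : ℂ) * ((N-k).factorial : ℂ)
      = (N.factorial : ℂ) := by
    exact_mod_cast congrArg (Nat.cast : ℕ → ℂ) (Nat.choose_mul_factorial_mul_factorial hk)
  have hf1 : ((N-k).factorial : ℂ) ≠ 0 := Nat.cast_ne_zero.mpr (Nat.factorial_ne_zero _)
  have hf2 : ((k).factorial : ℂ) ≠ 0 := Nat.cast_ne_zero.mpr (Nat.factorial_ne_zero _)
  have hf3 : ((N).factorial : ℂ) ≠ 0 := Nat.cast_ne_zero.mpr (Nat.factorial_ne_zero _)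
  simp only [kdfTerm, hNk, one_pow, mul_one, hsgn]
  set c := γ/2 with hcdef
  set Pa := poch α N with hPa
  set Pg := poch γ N with hPg
  set Pb := poch (c+1) k with hPb
  set Pd := poch c k with hPd
  set PB := poch βv N with hPB
  clear_value c Pa Pg Pb Pd PB
  field_simp
  linear_combination (Pa * Pg * (N.factorial:ℂ)) * hposh -
    (Pa * Pg * (c+(k:ℂ)) * Pd) * hfac

set_option maxHeartbeats 1000000 in
theorem stmt_16 (i : ℕ) (α γ : ℂ)
    (hne : α + 2 + (i : ℂ) ≠ 0)
    (hβ : ∀ m n : ℕ, poch (2 * α + 4 + 2 * (i : ℂ)) (m + n) ≠ 0)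
    (hd : ∀ n : ℕ, poch (γ / 2) n ≠ 0)
    (hΓs : ∀ r : ℕ, r ≤ i →
      notNonposInt ((α + (i : ℂ) + (r : ℂ) + 3) / 2) ∧ notNonposInt ((α - (i : ℂ) + (r : ℂ) + 1) / 2))
    (hsum : Summable fun p : ℕ × ℕ => ‖kdfTerm α γ (γ / 2 + 1) (2 * α + 4 + 2 * (i : ℂ)) (γ / 2) (-1) 1 p‖) :
    (∑' p : ℕ × ℕ, kdfTerm α γ (γ / 2 + 1) (2 * α + 4 + 2 * (i : ℂ)) (γ / 2) (-1) 1 p) =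
      (-1 : ℂ) ^ i * (2 : ℂ) ^ (((i : ℂ)) + 2) / ((α + 2 + (i : ℂ)) * ((i + 1).factorial : ℂ)) *
      ∑ r ∈ Finset.range (i + 1), (-1 : ℂ) ^ r * (i.choose r : ℂ) *
        Gamma ((α + (i : ℂ) + (r : ℂ) + 3) / 2) /
        Gamma ((α - (i : ℂ) + (r : ℂ) + 1) / 2) := by
  have hc : γ/2 ≠ 0 := by have := hd 1; rwa [poch_one] at this
  set βv : ℂ := 2*α + 4 + 2*(i:ℂ) with hβv
  have hβ0 : ∀ N, poch βv N ≠ 0 := fun N => by simpa using hβ N 0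
  have hβ1 : βv ≠ 0 := by have := hβ0 1; rwa [poch_one] at this
  set f := kdfTerm α γ (γ/2+1) βv (γ/2) (-1) 1 with hf
  have hfs : Summable f := hsum.of_norm
  -- diagonal decomposition of the double sum
  have hdiag : ∑' p : ℕ × ℕ, f p = ∑' N : ℕ, ∑ k ∈ Finset.range (N+1), f (N - k, k) := by
    rw [← diagEquiv.tsum_eq f]
    rw [Summable.tsum_sigma (f := fun x : Σ N : ℕ, Fin (N+1) => f (diagEquiv x))
      (diagEquiv.summable_iff.mpr hfs)]
    exact tsum_congr fun N => by
      rw [tsum_fintype]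
      exact Fin.sum_univ_eq_sum_range (fun k => f (N - k, k)) (N+1)
  have hg0 : ∑ k ∈ Finset.range (0+1), f (0 - k, k) = 1 := by
    rw [Finset.sum_range_one]
    simp [hf, kdfTerm, poch_zero]
  have hg1 : ∑ k ∈ Finset.range (1+1), f (1 - k, k) = 2*α/βv := by
    rw [Finset.sum_range_succ, Finset.sum_range_one]
    have hγ : γ ≠ 0 := fun h => hc (by rw [h]; norm_num)
    have e1 : f (1 - 0, 0) = -(α * γ / βv) := by
      simp only [hf, kdfTerm]
      norm_num [poch_zero, poch_one]
    have e2 : f (1 - 1, 1) = α * γ * (γ/2+1) / (βv * (γ/2)) := by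
      simp only [hf, kdfTerm]
      norm_num [poch_zero, poch_one]
    rw [e1, e2]
    field_simp
    ring
  have hzero : ∀ N, 2 ≤ N → ∑ k ∈ Finset.range (N+1), f (N - k, k) = 0 := by
    intro N hN
    have hcong : ∀ k ∈ Finset.range (N+1),
        f (N - k, k) = ((-1:ℂ)^N * poch α N * poch γ N /
            (poch βv N * (γ/2) * (N.factorial : ℂ)))
          * ((-1:ℂ)^k * (N.choose k : ℂ) * (γ/2 + (k:ℂ))) := by
      intro k hk
      exact kdf_diag α γ βv N k (Nat.lt_succ_iff.mp (Finset.mem_range.mp hk))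
        (hβ0 N) (hd k) hc
    rw [Finset.sum_congr rfl hcong, ← Finset.mul_sum, comb_zero (γ/2) N hN, mul_zero]
  have hL : ∑' p : ℕ × ℕ, f p = 1 + 2*α/βv := by
    rw [hdiag, tsum_eq_sum (s := ({0, 1} : Finset ℕ))
      (fun N hN => hzero N (by simp at hN; omega))]
    rw [Finset.sum_insert (by norm_num), Finset.sum_singleton, hg0, hg1]
  -- right-hand side: Gamma quotients are Pochhammer symbols
  have hS : ∑ r ∈ Finset.range (i + 1), (-1 : ℂ) ^ r * (i.choose r : ℂ) *
        Gamma ((α + (i : ℂ) + (r : ℂ) + 3) / 2) / Gamma ((α - (i : ℂ) + (r : ℂ) + 1) / 2)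
      = Asum i (i+1) ((α - (i:ℂ) + 1)/2) := by
    apply Finset.sum_congr rfl
    intro r hr
    obtain ⟨h1, h2⟩ := hΓs r (Nat.lt_succ_iff.mp (Finset.mem_range.mp hr))
    have hΓne : Gamma ((α - (i:ℂ) + (r:ℂ) + 1) / 2) ≠ 0 := Complex.Gamma_ne_zero h2
    have harg : (α + (i:ℂ) + (r:ℂ) + 3) / 2 = (α - (i:ℂ) + (r:ℂ) + 1)/2 + ((i+1 : ℕ):ℂ) := by
      push_cast; ring
    rw [harg, Gamma_add_nat _ h2]
    have harg2 : (α - (i:ℂ) + (r:ℂ) + 1)/2 = (α - (i:ℂ) + 1)/2 + (r:ℂ)/2 := by ring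
    rw [harg2] at hΓne ⊢
    rw [mul_div_assoc, mul_div_cancel_right₀ _ hΓne]
  rw [hL, hS, Asum_diag1]
  have hpow : (2:ℂ)^(((i:ℂ)) + 2) = (2:ℂ)^(i+2) := by
    rw [show ((i:ℂ)+2) = ((i+2:ℕ):ℂ) by push_cast; ring, Complex.cpow_natCast]
  rw [hpow]
  have key : (-1:ℂ)^i * (-1)^i = 1 := by rw [← mul_pow]; norm_num
  have hfa : ((i+1).factorial : ℂ) ≠ 0 := Nat.cast_ne_zero.mpr (Nat.factorial_ne_zero _)
  have h2p : (2:ℂ)^(i+2) ≠ 0 := pow_ne_zero _ two_ne_zero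
  field_simp
  linear_combination (-(4 *
    (2*α^2 + 3*α*(i:ℂ) + 6*α + (i:ℂ)^2 + 4*(i:ℂ) + 4))) * key
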